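/- Let g : ℝ → ℝ be L-Lipschitz with g(0) = 0 and let G denote its coordinatewise application to vectors. Let W, ΔW be real L'×D matrices, U, ΔU real L'×L' matrices, and x_1, …, x_J ∈ ℝ^D. Define h_0 = h′_0 = 0, h_k = G(W x_k + U h_{k−1}), and h′_k = G((W+ΔW) x_k + (U+ΔU) h′_{k−1}) for k = 1, …, J. Then for every 1 ≤ j ≤ J, ‖h′_j − h_j‖ ≤ L Σ_{k=1}^{j} (L ‖U+ΔU‖_op)^{j−k} ( ‖ΔW‖_op ‖x_k‖ + ‖ΔU‖_op ‖h_{k−1}‖ ). -/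
import Mathlib


open scoped NNReal

lemma euclid_norm_le_of_coord {n : ℕ} (u v : EuclideanSpace ℝ (Fin n)) (L : ℝ)
    (hL : 0 ≤ L) (hc : ∀ i, |u i| ≤ L * |v i|) : ‖u‖ ≤ L * ‖v‖ := by
  rw [EuclideanSpace.norm_eq, EuclideanSpace.norm_eq]
  rw [show L * Real.sqrt (∑ i, ‖v i‖ ^ 2) = Real.sqrt (L ^ 2 * ∑ i, ‖v i‖ ^ 2) by
    rw [Real.sqrt_mul (sq_nonneg L), Real.sqrt_sq hL]]
  apply Real.sqrt_le_sqrt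
  rw [Finset.mul_sum]
  apply Finset.sum_le_sum
  intro i _
  have := hc i
  calc ‖u i‖ ^ 2 ≤ (L * |v i|) ^ 2 := by
        rw [Real.norm_eq_abs]
        exact pow_le_pow_left₀ (abs_nonneg _) this 2
    _ = L ^ 2 * ‖v i‖ ^ 2 := by rw [mul_pow, Real.norm_eq_abs]

/-- Unrolled weight-perturbation bound for RNN hidden states: with an `L`-Lipschitz
activation `g`, `g(0) = 0`, hidden states `h_k` driven by weights `(W, U)` and `h′_k`
driven by the perturbed weights `(W+ΔW, U+ΔU)` (both started at `0`), one has
`‖h′_j − h_j‖ ≤ L Σ_{k=1}^{j} (L ‖U+ΔU‖_op)^{j−k} (‖ΔW‖_op ‖x_k‖ + ‖ΔU‖_op ‖h_{k−1}‖)`. -/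
theorem rnn_unrolled_perturbation_bound
    (L : ℝ≥0) (g : ℝ → ℝ) (hg : LipschitzWith L g) (hg0 : g 0 = 0)
    (L' D J : ℕ)
    (W ΔW : Matrix (Fin L') (Fin D) ℝ) (U ΔU : Matrix (Fin L') (Fin L') ℝ)
    (x : ℕ → EuclideanSpace ℝ (Fin D))
    (h h' : ℕ → EuclideanSpace ℝ (Fin L'))
    (h0 : h 0 = 0) (h'0 : h' 0 = 0)
    (hrec : ∀ k i, h (k + 1) i =
      g ((Matrix.toEuclideanLin W (x (k + 1)) + Matrix.toEuclideanLin U (h k)) i))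
    (h'rec : ∀ k i, h' (k + 1) i =
      g ((Matrix.toEuclideanLin (W + ΔW) (x (k + 1))
            + Matrix.toEuclideanLin (U + ΔU) (h' k)) i))
    (j : ℕ) (hj1 : 1 ≤ j) (hjJ : j ≤ J) :
    ‖h' j - h j‖ ≤ (L : ℝ) *
      ∑ k ∈ Finset.Icc 1 j,
        ((L : ℝ) * ‖LinearMap.toContinuousLinearMap (Matrix.toEuclideanLin (U + ΔU))‖)
            ^ (j - k) *
          (‖LinearMap.toContinuousLinearMap (Matrix.toEuclideanLin ΔW)‖ * ‖x k‖
            + ‖LinearMap.toContinuousLinearMap (Matrix.toEuclideanLin ΔU)‖ * ‖h (k - 1)‖) := by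
  clear hjJ
  set A := ‖LinearMap.toContinuousLinearMap (Matrix.toEuclideanLin (U + ΔU))‖ with hA
  set B := ‖LinearMap.toContinuousLinearMap (Matrix.toEuclideanLin ΔW)‖ with hB
  set C := ‖LinearMap.toContinuousLinearMap (Matrix.toEuclideanLin ΔU)‖ with hC
  have hA0 : 0 ≤ A := norm_nonneg _
  have hB0 : 0 ≤ B := norm_nonneg _
  have hC0 : 0 ≤ C := norm_nonneg _
  have hL0 : (0:ℝ) ≤ (L:ℝ) := L.coe_nonneg
  -- coordinatewise Lipschitz bound for matrices as CLMs
  have opW : ∀ v : EuclideanSpace ℝ (Fin D),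
      ‖Matrix.toEuclideanLin ΔW v‖ ≤ B * ‖v‖ := fun v =>
    (LinearMap.toContinuousLinearMap (Matrix.toEuclideanLin ΔW)).le_opNorm v
  have opU : ∀ v : EuclideanSpace ℝ (Fin L'),
      ‖Matrix.toEuclideanLin (U + ΔU) v‖ ≤ A * ‖v‖ := fun v =>
    (LinearMap.toContinuousLinearMap (Matrix.toEuclideanLin (U + ΔU))).le_opNorm v
  have opDU : ∀ v : EuclideanSpace ℝ (Fin L'),
      ‖Matrix.toEuclideanLin ΔU v‖ ≤ C * ‖v‖ := fun v =>
    (LinearMap.toContinuousLinearMap (Matrix.toEuclideanLin ΔU)).le_opNorm v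
  -- the per-step estimate
  have step : ∀ k : ℕ, ‖h' (k+1) - h (k+1)‖ ≤
      (L:ℝ) * (A * ‖h' k - h k‖ + (B * ‖x (k+1)‖ + C * ‖h k‖)) := by
    intro k
    set a : EuclideanSpace ℝ (Fin L') :=
      Matrix.toEuclideanLin W (x (k + 1)) + Matrix.toEuclideanLin U (h k) with ha
    set a' : EuclideanSpace ℝ (Fin L') :=
      Matrix.toEuclideanLin (W + ΔW) (x (k + 1)) + Matrix.toEuclideanLin (U + ΔU) (h' k)
      with ha'
    have hco : ∀ i, |(h' (k+1) - h (k+1)) i| ≤ (L:ℝ) * |(a' - a) i| := by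
      intro i
      have : (h' (k+1) - h (k+1)) i = g (a' i) - g (a i) := by
        rw [show (h' (k+1) - h (k+1)) i = h' (k+1) i - h (k+1) i from rfl,
          h'rec k i, hrec k i]
      rw [this]
      have := hg.dist_le_mul (a' i) (a i)
      simpa [Real.dist_eq] using this
    have h1 : ‖h' (k+1) - h (k+1)‖ ≤ (L:ℝ) * ‖a' - a‖ :=
      euclid_norm_le_of_coord _ _ _ hL0 hco
    have hdecomp : a' - a = Matrix.toEuclideanLin ΔW (x (k+1))
        + (Matrix.toEuclideanLin (U + ΔU) (h' k - h k) + Matrix.toEuclideanLin ΔU (h k)) := by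
      rw [ha, ha']
      simp only [map_add, map_sub, LinearMap.add_apply]
      abel
    have h2 : ‖a' - a‖ ≤ B * ‖x (k+1)‖ + (A * ‖h' k - h k‖ + C * ‖h k‖) := by
      rw [hdecomp]
      calc ‖Matrix.toEuclideanLin ΔW (x (k+1))
            + (Matrix.toEuclideanLin (U + ΔU) (h' k - h k) + Matrix.toEuclideanLin ΔU (h k))‖
          ≤ ‖Matrix.toEuclideanLin ΔW (x (k+1))‖
            + (‖Matrix.toEuclideanLin (U + ΔU) (h' k - h k)‖
              + ‖Matrix.toEuclideanLin ΔU (h k)‖) :=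
            (norm_add_le _ _).trans (by gcongr; exact norm_add_le _ _)
        _ ≤ B * ‖x (k+1)‖ + (A * ‖h' k - h k‖ + C * ‖h k‖) := by
            gcongr
            · exact opW _
            · exact opU _
            · exact opDU _
    calc ‖h' (k+1) - h (k+1)‖ ≤ (L:ℝ) * ‖a' - a‖ := h1
      _ ≤ (L:ℝ) * (A * ‖h' k - h k‖ + (B * ‖x (k+1)‖ + C * ‖h k‖)) := by
          apply mul_le_mul_of_nonneg_left _ hL0
          linarith
  -- induction from j = 1
  induction j, hj1 using Nat.le_induction with
  | base =>
      have := step 0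
      rw [h0, h'0, sub_zero, norm_zero] at this
      simpa [h0] using this
  | succ n hn ih =>
      have hsum : ∑ k ∈ Finset.Icc 1 (n+1), ((L:ℝ) * A) ^ (n + 1 - k) *
            (B * ‖x k‖ + C * ‖h (k-1)‖)
          = ((L:ℝ) * A) * ∑ k ∈ Finset.Icc 1 n, ((L:ℝ) * A) ^ (n - k) *
              (B * ‖x k‖ + C * ‖h (k-1)‖)
            + (B * ‖x (n+1)‖ + C * ‖h n‖) := by
        rw [Finset.sum_Icc_succ_top (by omega : 1 ≤ n + 1), Finset.mul_sum]
        congr 1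
        · apply Finset.sum_congr rfl
          intro k hk
          have hk' : k ≤ n := (Finset.mem_Icc.mp hk).2
          rw [show n + 1 - k = (n - k) + 1 by omega, pow_succ]
          ring
        · simp
      have hsumnn : 0 ≤ ∑ k ∈ Finset.Icc 1 n, ((L:ℝ) * A) ^ (n - k) *
          (B * ‖x k‖ + C * ‖h (k-1)‖) := by
        apply Finset.sum_nonneg
        intro k _
        apply mul_nonneg (pow_nonneg (mul_nonneg hL0 hA0) _)
        positivity
      calc ‖h' (n+1) - h (n+1)‖
          ≤ (L:ℝ) * (A * ‖h' n - h n‖ + (B * ‖x (n+1)‖ + C * ‖h n‖)) := step n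
        _ ≤ (L:ℝ) * (A * ((L:ℝ) * ∑ k ∈ Finset.Icc 1 n, ((L:ℝ) * A) ^ (n - k) *
              (B * ‖x k‖ + C * ‖h (k-1)‖)) + (B * ‖x (n+1)‖ + C * ‖h n‖)) := by
            apply mul_le_mul_of_nonneg_left _ hL0
            have := mul_le_mul_of_nonneg_left ih hA0
            linarith
        _ = (L:ℝ) * ∑ k ∈ Finset.Icc 1 (n+1), ((L:ℝ) * A) ^ (n + 1 - k) *
              (B * ‖x k‖ + C * ‖h (k-1)‖) := by rw [hsum]; ring
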